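/- (Bound on number of restart segments in Theorem 5.4.) Let J be a positive integer, c > 0, and let b_1, …, b_J be positive reals and d_1, …, d_J nonnegative reals such that for every j, c·d_j ≥ (√2 − 1)·b_j^{−1/4}. If Σ_{j=1}^J b_j ≤ T and Σ_{j=1}^J d_j ≤ Δ, then J ≤ (√2 − 1)^{−4/5} · (c·Δ)^{4/5} · T^{1/5}. -/

import Mathlib

/-- (Bound on the number of restart segments in Theorem 5.4.) If each segment of length b_j
and nonstationarity d_j satisfies c·d_j ≥ (√2 − 1)·b_j^{-1/4}, Σ b_j ≤ T and Σ d_j ≤ Δ, then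
J ≤ (√2 − 1)^{-4/5}·(cΔ)^{4/5}·T^{1/5}. -/
theorem stmt_11 (J : ℕ) (hJ : 0 < J) (c : ℝ) (hc : 0 < c) (T Δ : ℝ)
    (b d : Fin J → ℝ) (hb : ∀ j, 0 < b j) (hd : ∀ j, 0 ≤ d j)
    (hgap : ∀ j, (Real.sqrt 2 - 1) * (b j) ^ (-(1 : ℝ) / 4) ≤ c * d j)
    (hbT : ∑ j, b j ≤ T) (hdΔ : ∑ j, d j ≤ Δ) :
    (J : ℝ) ≤ (Real.sqrt 2 - 1) ^ (-(4 : ℝ) / 5) * (c * Δ) ^ ((4 : ℝ) / 5) * T ^ ((1 : ℝ) / 5) := by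
  set κ : ℝ := Real.sqrt 2 - 1 with hκdef
  have hκ : 0 < κ := by
    have : (1 : ℝ) < Real.sqrt 2 := by
      rw [show (1 : ℝ) = Real.sqrt 1 by simp]
      exact Real.sqrt_lt_sqrt (by norm_num) (by norm_num)
    simpa [hκdef] using sub_pos.2 this
  -- u j = c * d j / κ
  set u : Fin J → ℝ := fun j => c * d j / κ with hu
  have hu0 : ∀ j, 0 ≤ u j := fun j => div_nonneg (mul_nonneg hc.le (hd j)) hκ.le
  have hu1 : ∀ j, (b j) ^ (-(1 : ℝ) / 4) ≤ u j := fun j =>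
    (le_div_iff₀ hκ).2 (by rw [mul_comm]; exact hgap j)
  -- key pointwise bound: 1 ≤ (u j)^{4/5} * (b j)^{1/5}
  have hpt : ∀ j, (1 : ℝ) ≤ (u j) ^ ((4 : ℝ) / 5) * (b j) ^ ((1 : ℝ) / 5) := by
    intro j
    have h1 : ((b j) ^ (-(1 : ℝ) / 4)) ^ ((4 : ℝ) / 5) ≤ (u j) ^ ((4 : ℝ) / 5) :=
      Real.rpow_le_rpow (Real.rpow_nonneg (hb j).le _) (hu1 j) (by norm_num)
    have h2 : ((b j) ^ (-(1 : ℝ) / 4)) ^ ((4 : ℝ) / 5) = (b j) ^ (-(1 : ℝ) / 5) := by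
      rw [← Real.rpow_mul (hb j).le]; norm_num
    calc (1 : ℝ) = (b j) ^ (-(1 : ℝ) / 5) * (b j) ^ ((1 : ℝ) / 5) := by
          rw [← Real.rpow_add (hb j)]; norm_num
      _ ≤ (u j) ^ ((4 : ℝ) / 5) * (b j) ^ ((1 : ℝ) / 5) := by
          rw [← h2]
          exact mul_le_mul_of_nonneg_right h1 (Real.rpow_nonneg (hb j).le _)
  -- Hölder
  have hconj : Real.HolderConjugate ((5 : ℝ) / 4) 5 := Real.holderConjugate_iff.mpr ⟨by norm_num, by norm_num⟩
  have hholder := Real.inner_le_Lp_mul_Lq_of_nonneg (Finset.univ : Finset (Fin J)) hconj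
    (f := fun j => (u j) ^ ((4 : ℝ) / 5)) (g := fun j => (b j) ^ ((1 : ℝ) / 5))
    (fun j _ => Real.rpow_nonneg (hu0 j) _) (fun j _ => Real.rpow_nonneg (hb j).le _)
  have hJle : (J : ℝ) ≤ ∑ j, (u j) ^ ((4 : ℝ) / 5) * (b j) ^ ((1 : ℝ) / 5) := by
    calc (J : ℝ) = ∑ _j : Fin J, (1 : ℝ) := by simp
      _ ≤ _ := Finset.sum_le_sum fun j _ => hpt j
  have hfp : ∀ j, ((u j) ^ ((4 : ℝ) / 5)) ^ ((5 : ℝ) / 4) = u j := by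
    intro j
    rw [← Real.rpow_mul (hu0 j)]; norm_num
  have hgq : ∀ j, ((b j) ^ ((1 : ℝ) / 5)) ^ ((5 : ℝ)) = b j := by
    intro j
    rw [← Real.rpow_mul (hb j).le]; norm_num
  have hholder' : (J : ℝ) ≤ (∑ j, u j) ^ ((4 : ℝ) / 5) * (∑ j, b j) ^ ((1 : ℝ) / 5) := by
    refine hJle.trans (hholder.trans_eq ?_)
    simp only [hfp, hgq]
    norm_num
  -- sum bounds
  have hsumu : ∑ j, u j ≤ c * Δ / κ := by
    have : ∑ j, u j = (∑ j, d j) * (c / κ) := by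
      rw [Finset.sum_mul]; exact Finset.sum_congr rfl fun j _ => by
        simp [hu]; ring
    rw [this]
    calc (∑ j, d j) * (c / κ) ≤ Δ * (c / κ) :=
          mul_le_mul_of_nonneg_right hdΔ (div_nonneg hc.le hκ.le)
      _ = c * Δ / κ := by ring
  have hsumu0 : 0 ≤ ∑ j, u j := Finset.sum_nonneg fun j _ => hu0 j
  have hsumb0 : 0 ≤ ∑ j, b j := Finset.sum_nonneg fun j _ => (hb j).le
  have hT0 : 0 ≤ T := hsumb0.trans hbT
  have hcΔ0 : 0 ≤ c * Δ := by
    have h := hsumu0.trans hsumu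
    have : c * Δ = (c * Δ / κ) * κ := by field_simp
    rw [this]; exact mul_nonneg h hκ.le
  have hfinal : (∑ j, u j) ^ ((4 : ℝ) / 5) * (∑ j, b j) ^ ((1 : ℝ) / 5)
      ≤ (c * Δ / κ) ^ ((4 : ℝ) / 5) * T ^ ((1 : ℝ) / 5) := by
    have h1 := Real.rpow_le_rpow hsumu0 hsumu (by norm_num : (0:ℝ) ≤ 4/5)
    have h2 := Real.rpow_le_rpow hsumb0 hbT (by norm_num : (0:ℝ) ≤ 1/5)
    exact mul_le_mul h1 h2 (Real.rpow_nonneg hsumb0 _) (Real.rpow_nonneg (div_nonneg hcΔ0 hκ.le) _)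
  have heq : (c * Δ / κ) ^ ((4 : ℝ) / 5) = κ ^ (-(4 : ℝ) / 5) * (c * Δ) ^ ((4 : ℝ) / 5) := by
    rw [Real.div_rpow hcΔ0 hκ.le, div_eq_mul_inv, ← Real.rpow_neg hκ.le, mul_comm]
    norm_num
  calc (J : ℝ) ≤ _ := hholder'
    _ ≤ (c * Δ / κ) ^ ((4 : ℝ) / 5) * T ^ ((1 : ℝ) / 5) := hfinal
    _ = κ ^ (-(4 : ℝ) / 5) * (c * Δ) ^ ((4 : ℝ) / 5) * T ^ ((1 : ℝ) / 5) := by rw [heq]
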